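/- Let V be a real vector space, ω an alternating bilinear form on V, and D : V → V a linear map such that Q(v,w) := ω(Dv,w) is a symmetric positive definite bilinear form on V. Let α be a linear functional on V, x ∈ V, and z, t* ∈ ℝ, z*, t ∈ ℝ with t·z* > 0. Assume N := sup{ t·α(Dv) + z*·ω(x,v) : v ∈ V, Q(v,v) ≤ 1 } < ∞. Then inf_{v ∈ V} [ z*·z + α(x) − z*·ω(v,x) + t·t* + t·α(Dv) + (t·z*/2)·ω(Dv,v) ] = z*·z + α(x) + t·t* − N²/(2·t·z*). -/

import Mathlib

/-- Infimum over the coadjoint direction: for `Q(v,w) := ω(Dv,w)` symmetric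
positive definite, `t·z* > 0`, and `N = sup { t·α(Dv) + z*·ω(x,v) : Q(v,v) ≤ 1 } < ∞`,
the infimum over `v ∈ V` of
`z*·z + α(x) - z*·ω(v,x) + t·t* + t·α(Dv) + (t·z*/2)·ω(Dv,v)`
equals `z*·z + α(x) + t·t* - N²/(2·t·z*)`. -/
theorem coadjoint_inf_formula
    {V : Type*} [AddCommGroup V] [Module ℝ V]
    (ω : V →ₗ[ℝ] V →ₗ[ℝ] ℝ) (halt : ∀ v : V, ω v v = 0)
    (D : V →ₗ[ℝ] V)
    (hQsymm : ∀ v w : V, ω (D v) w = ω (D w) v)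
    (hQpos : ∀ v : V, v ≠ 0 → 0 < ω (D v) v)
    (α : V →ₗ[ℝ] ℝ) (x : V) (z tstar zstar t : ℝ) (htz : 0 < t * zstar)
    (N : ℝ)
    (hN : IsLUB (Set.image (fun v : V => t * α (D v) + zstar * ω x v)
      {v : V | ω (D v) v ≤ 1}) N) :
    IsGLB (Set.range fun v : V =>
        zstar * z + α x - zstar * ω v x + t * tstar + t * α (D v)
          + (t * zstar / 2) * ω (D v) v)
      (zstar * z + α x + t * tstar - N ^ 2 / (2 * t * zstar)) := by
  have hc : (0:ℝ) < t * zstar := htz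
  have hanti : ∀ v w : V, ω v w = - ω w v := by
    intro v w
    have h := halt (v + w)
    simp [map_add, halt] at h
    linarith
  have hQ0 : ∀ v : V, 0 ≤ ω (D v) v := by
    intro v
    rcases eq_or_ne v 0 with rfl | h
    · simp
    · exact (hQpos v h).le
  have h0mem : (0:V) ∈ {v : V | ω (D v) v ≤ 1} := by simp
  have hN0 : 0 ≤ N := by
    have := hN.1 (Set.mem_image_of_mem _ h0mem)
    simpa using this
  have hkey : ∀ w : V, t * α (D w) + zstar * ω x w ≤ N * Real.sqrt (ω (D w) w) := by
    intro w
    rcases eq_or_ne w 0 with rfl | hw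
    · simp
    · have hq : 0 < ω (D w) w := hQpos w hw
      have hqs : 0 < Real.sqrt (ω (D w) w) := Real.sqrt_pos.2 hq
      set q := Real.sqrt (ω (D w) w) with hqdef
      have hq2 : q ^ 2 = ω (D w) w := Real.sq_sqrt hq.le
      have hone : q⁻¹ * (q⁻¹ * q ^ 2) = 1 := by
        field_simp
      have hmem : q⁻¹ • w ∈ {v : V | ω (D v) v ≤ 1} := by
        have he : ω (D (q⁻¹ • w)) (q⁻¹ • w) = q⁻¹ * (q⁻¹ * ω (D w) w) := by
          simp [map_smul, smul_eq_mul]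
        rw [Set.mem_setOf_eq, he, ← hq2, hone]
      have hle : t * (q⁻¹ * α (D w)) + zstar * (q⁻¹ * ω x w) ≤ N := by
        have := hN.1 (Set.mem_image_of_mem _ hmem)
        simpa [map_smul, smul_eq_mul] using this
      have h2 : (t * (q⁻¹ * α (D w)) + zstar * (q⁻¹ * ω x w)) * q ≤ N * q :=
        mul_le_mul_of_nonneg_right hle hqs.le
      have h3 : (t * (q⁻¹ * α (D w)) + zstar * (q⁻¹ * ω x w)) * q
          = t * α (D w) + zstar * ω x w := by
        field_simp
      linarith
  constructor
  · rintro y ⟨v, rfl⟩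
    have hax : ω v x = - ω x v := hanti v x
    set q := Real.sqrt (ω (D v) v) with hqdef
    have hq2 : q ^ 2 = ω (D v) v := Real.sq_sqrt (hQ0 v)
    have hqn : 0 ≤ q := Real.sqrt_nonneg _
    have hL : -(t * α (D v) + zstar * ω x v) ≤ N * q := by
      have h := hkey (-v)
      have hQneg : ω (D (-v)) (-v) = ω (D v) v := by simp
      rw [hQneg] at h
      simp only [map_neg, neg_neg] at h
      linarith
    have hdiv : N * q - (t * zstar / 2) * q ^ 2 ≤ N ^ 2 / (2 * t * zstar) := by
      rw [le_div_iff₀ (by linarith)]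
      nlinarith [sq_nonneg ((t * zstar) * q - N)]
    have hq2' : (t * zstar / 2) * q ^ 2 = (t * zstar / 2) * ω (D v) v := by rw [hq2]
    simp only [hax]
    linarith
  · intro b hb
    rw [mem_lowerBounds] at hb
    have key : ∀ ε : ℝ, 0 < ε →
        b ≤ zstar * z + α x + t * tstar - N ^ 2 / (2 * t * zstar) + ε := by
      intro ε hε
      set δ := ε * (t * zstar) / (N + 1) with hδdef
      have hδ : 0 < δ := by positivity
      obtain ⟨y, hy, hylt, -⟩ := hN.exists_between (show N - δ < N by linarith)
      obtain ⟨v, hv, rfl⟩ := hy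
      have hQv : ω (D v) v ≤ 1 := hv
      set a := N / (t * zstar) with hadef
      have ha : 0 ≤ a := by positivity
      have hbu : b ≤ zstar * z + α x - zstar * ω ((-a) • v) x + t * tstar
            + t * α (D ((-a) • v)) + (t * zstar / 2) * ω (D ((-a) • v)) ((-a) • v) :=
        hb _ ⟨(-a) • v, rfl⟩
      have hfu : zstar * z + α x - zstar * ω ((-a) • v) x + t * tstar
            + t * α (D ((-a) • v)) + (t * zstar / 2) * ω (D ((-a) • v)) ((-a) • v)
          = zstar * z + α x + t * tstar
            - a * (t * α (D v) + zstar * ω x v)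
            + a ^ 2 * (t * zstar / 2) * ω (D v) v := by
        have hax : ω v x = - ω x v := hanti v x
        simp only [map_smul, smul_eq_mul, LinearMap.smul_apply, map_neg,
          LinearMap.neg_apply, neg_smul]
        rw [hax]
        ring
      rw [hfu] at hbu
      have e1 : a * (t * zstar) = N := div_mul_cancel₀ N hc.ne'
      have ht0 : t ≠ 0 := left_ne_zero_of_mul hc.ne'
      have hz0 : zstar ≠ 0 := right_ne_zero_of_mul hc.ne'
      have e3 : N ^ 2 / (2 * t * zstar) = a ^ 2 * (t * zstar / 2) := by
        rw [hadef]
        field_simp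
      have e4 : a * δ ≤ ε := by
        rw [hδdef, hadef, div_mul_div_comm, div_le_iff₀ (by positivity)]
        nlinarith [mul_pos hε hc]
      have h1 : a * (N - δ) ≤ a * (t * α (D v) + zstar * ω x v) :=
        mul_le_mul_of_nonneg_left hylt.le ha
      have h2 : a ^ 2 * (t * zstar / 2) * ω (D v) v ≤ a ^ 2 * (t * zstar / 2) := by
        nlinarith [sq_nonneg a, mul_nonneg (sq_nonneg a) hc.le, hQv, hc]
      have e5 : a * N = 2 * (a ^ 2 * (t * zstar / 2)) := by
        rw [← e1]; ring
      rw [e3]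
      linarith
    by_contra hlt
    push_neg at hlt
    have := key ((b - (zstar * z + α x + t * tstar - N ^ 2 / (2 * t * zstar))) / 2)
      (by linarith)
    linarith
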